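/- Let Σ̂ be a symmetric positive definite d×d matrix and S a symmetric positive semidefinite d×d matrix. Define G = Σ̂^{-1/2} (Σ̂^{1/2} S² Σ̂^{1/2})^{1/2} Σ̂^{-1/2}. Then G is symmetric positive semidefinite and G Σ̂ Gᵀ = S². -/

import Mathlib

open ProbabilityTheory MeasureTheory Matrix

/-- The standard logistic (sigmoid) function. -/
noncomputable def sigmoid (t : ℝ) : ℝ := 1 / (1 + Real.exp (-t))

/-- CDF of the standard one-dimensional Gaussian. -/
noncomputable def stdNormalCDF (x : ℝ) : ℝ := (gaussianReal 0 1 (Set.Iic x)).toReal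

/-- Quantile function of the standard one-dimensional Gaussian. -/
noncomputable def stdNormalQuantile (p : ℝ) : ℝ := sInf {x : ℝ | p ≤ stdNormalCDF x}

/-- `P` is the multivariate Gaussian `N(m, C)`: every one-dimensional linear marginal
`θᵀX` is the real Gaussian with mean `θᵀm` and variance `θᵀCθ`. -/
def IsMultiGaussian {d : ℕ} (P : Measure (Fin d → ℝ)) (m : Fin d → ℝ)
    (C : Matrix (Fin d) (Fin d) ℝ) : Prop :=
  ∀ θ : Fin d → ℝ,
    P.map (fun x => θ ⬝ᵥ x) = gaussianReal (θ ⬝ᵥ m) (Real.toNNReal (θ ⬝ᵥ C.mulVec θ))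

/-- Euclidean (ℓ²) norm of a vector in ℝ^d. -/
noncomputable def euclNorm {d : ℕ} (v : Fin d → ℝ) : ℝ := Real.sqrt (v ⬝ᵥ v)

/-- Frobenius norm of a d×d real matrix. -/
noncomputable def frobNorm {d : ℕ} (A : Matrix (Fin d) (Fin d) ℝ) : ℝ :=
  Real.sqrt (∑ i, ∑ j, (A i j) ^ 2)

namespace Matrix.PosSemidef

open scoped ComplexOrder

variable {n 𝕜 : Type*} [Fintype n] [RCLike 𝕜] [DecidableEq n] {A : Matrix n n 𝕜}

/-- The positive semidefinite square root of a positive semidefinite matrix -/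
noncomputable def sqrt (hA : PosSemidef A) : Matrix n n 𝕜 :=
  hA.1.eigenvectorUnitary.1 * diagonal ((↑) ∘ (√·) ∘ hA.1.eigenvalues) *
  (star hA.1.eigenvectorUnitary : Matrix n n 𝕜)

lemma posSemidef_sqrt (hA : PosSemidef A) : PosSemidef hA.sqrt := by
  apply PosSemidef.mul_mul_conjTranspose_same
  refine posSemidef_diagonal_iff.mpr fun i ↦ ?_
  rw [Function.comp_apply, RCLike.nonneg_iff]
  constructor
  · simp only [RCLike.ofReal_re]; exact Real.sqrt_nonneg _
  · simp only [RCLike.ofReal_im]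

end Matrix.PosSemidef

namespace Matrix.PosSemidef

open scoped ComplexOrder

lemma sqrt_mul_self {n 𝕜 : Type*} [Fintype n] [RCLike 𝕜] [DecidableEq n] {A : Matrix n n 𝕜}
    (hA : PosSemidef A) : hA.sqrt * hA.sqrt = A := by
  have hd : diagonal ((↑) ∘ (√·) ∘ hA.1.eigenvalues) *
      diagonal ((↑) ∘ (√·) ∘ hA.1.eigenvalues) =
      (diagonal (RCLike.ofReal ∘ hA.1.eigenvalues) : Matrix n n 𝕜) := by
    rw [diagonal_mul_diagonal]; congr 1; funext i
    simp only [Function.comp_apply, ← RCLike.ofReal_mul,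
      Real.mul_self_sqrt (hA.eigenvalues_nonneg i)]
  conv_rhs => rw [hA.1.spectral_theorem, Unitary.conjStarAlgAut_apply, ← hd]
  unfold sqrt
  have hu : (star hA.1.eigenvectorUnitary : Matrix n n 𝕜) * hA.1.eigenvectorUnitary.1 = 1 :=
    Unitary.coe_star_mul_self _
  simp only [mul_assoc]
  rw [← mul_assoc (star hA.1.eigenvectorUnitary : Matrix n n 𝕜), hu, one_mul]

end Matrix.PosSemidef

lemma aux_psd {d : ℕ} {A M : Matrix (Fin d) (Fin d) ℝ} (hA : A.IsHermitian)
    (hM : M.PosSemidef) : (A * M * A).PosSemidef := by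
  have h := hM.mul_mul_conjTranspose_same A
  rwa [hA.eq] at h

theorem stmt3 {d : ℕ} {Sig S : Matrix (Fin d) (Fin d) ℝ}
    (hSig : Sig.PosDef) (hS : S.PosSemidef) :
    ∀ G : Matrix (Fin d) (Fin d) ℝ,
      G = hSig.posSemidef.sqrt⁻¹ *
            (aux_psd hSig.posSemidef.posSemidef_sqrt.1 (hS.pow 2)).sqrt *
            hSig.posSemidef.sqrt⁻¹ →
      G.PosSemidef ∧ G * Sig * Gᵀ = S ^ 2 := by
  intro G hG
  set R := hSig.posSemidef.sqrt with hR
  set T := (aux_psd hSig.posSemidef.posSemidef_sqrt.1 (hS.pow 2)).sqrt with hT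
  have hTpsd : T.PosSemidef := Matrix.PosSemidef.posSemidef_sqrt _
  have hRdet : IsUnit R.det := by
    have h2 : R.det * R.det = Sig.det := by
      rw [← Matrix.det_mul, hSig.posSemidef.sqrt_mul_self]
    have : Sig.det ≠ 0 := ne_of_gt hSig.det_pos
    exact isUnit_iff_ne_zero.mpr (fun h => by simp [h] at h2; exact this h2.symm)
  have hRinvH : (R⁻¹).IsHermitian := hSig.posSemidef.posSemidef_sqrt.1.inv
  have hGpsd : G.PosSemidef := by
    rw [hG]; exact aux_psd hRinvH hTpsd
  refine ⟨hGpsd, ?_⟩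
  have hGt : Gᵀ = G := by simpa using hGpsd.1.eq
  have hT2 : T * T = R * S ^ 2 * R := Matrix.PosSemidef.sqrt_mul_self _
  have hSR : R * R = Sig := hSig.posSemidef.sqrt_mul_self
  rw [hGt, ← hSR, hG]
  calc R⁻¹ * T * R⁻¹ * (R * R) * (R⁻¹ * T * R⁻¹)
      = R⁻¹ * (T * (R⁻¹ * R) * ((R * R⁻¹) * T)) * R⁻¹ := by simp only [mul_assoc, one_mul, mul_one]
    _ = R⁻¹ * (T * T) * R⁻¹ := by
        rw [Matrix.nonsing_inv_mul _ hRdet, Matrix.mul_nonsing_inv _ hRdet]; simp only [mul_assoc, one_mul, mul_one]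
    _ = R⁻¹ * R * S ^ 2 * (R * R⁻¹) := by rw [hT2]; simp only [mul_assoc]
    _ = S ^ 2 := by
        rw [Matrix.nonsing_inv_mul _ hRdet, Matrix.mul_nonsing_inv _ hRdet]; simp only [mul_assoc, one_mul, mul_one]
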